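/- Let G be a finite digraph on n nodes and let 𝒢 be a subgraph of G with n₁ nodes. Then for every integer γ ≥ 1, the cycle removal threshold satisfies T_cr^γ(𝒢) ≤ γ·n + n − n₁ − 1. Concretely: every walk W from i to j visiting a node of 𝒢 admits a walk V from i to j visiting a node of 𝒢, obtained from W by removing cycles, with l(V) ≡ l(W) (mod γ) and l(V) ≤ γ·n + n − n₁ − 1. -/

import Mathlib

open Classical

noncomputable section

namespace MaxPlus

/-- A square matrix over the max-plus semiring `ℝmax = ℝ ∪ {-∞}`,
represented as `WithBot ℝ` (with `⊥ = -∞`, `+` the usual addition). -/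
abbrev MPMat (n : ℕ) := Fin n → Fin n → WithBot ℝ

variable {n : ℕ}

/-- Max-plus matrix multiplication: `(A⊗B)_{ij} = max_k (a_{ik} + b_{kj})`. -/
def mpMul (A B : MPMat n) : MPMat n := fun i j => Finset.univ.sup fun k => A i k + B k j

/-- Max-plus matrix power, with `A^0` the max-plus identity. -/
def mpPow (A : MPMat n) : ℕ → MPMat n
  | 0 => fun i j => if i = j then (0 : WithBot ℝ) else ⊥
  | t + 1 => mpMul A (mpPow A t)

/-- Max-plus matrix-vector product. -/
def mpMulVec (A : MPMat n) (x : Fin n → WithBot ℝ) : Fin n → WithBot ℝ :=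
  fun i => Finset.univ.sup fun k => A i k + x k

/-- A digraph on the node set `{1,…,n}`: a set of vertices together with an
edge relation. -/
structure SubD (n : ℕ) where
  verts : Set (Fin n)
  edge : Fin n → Fin n → Prop

/-- The weighted digraph `𝒟(A)` of a max-plus matrix: all `n` nodes, with an
edge `(i,j)` whenever `a_{ij} ≠ -∞`. -/
def digr (A : MPMat n) : SubD n := ⟨Set.univ, fun i j => A i j ≠ ⊥⟩

/-- `W` (a nonempty list of nodes) is a walk in the digraph `G`. -/
def IsWalkIn (G : SubD n) (W : List (Fin n)) : Prop :=
  W ≠ [] ∧ (∀ v ∈ W, v ∈ G.verts) ∧ W.Chain' G.edge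

/-- The length of a walk: its number of edges (number of nodes minus one). -/
def elen (W : List (Fin n)) : ℕ := W.length - 1

/-- The weight `p(W)` of a walk: sum of the weights of its edges. -/
def walkWeight (A : MPMat n) (W : List (Fin n)) : WithBot ℝ :=
  ((W.zip W.tail).map fun p => A p.1 p.2).sum

/-- `W` is a cycle in `G`: a nonempty closed walk with pairwise distinct
nodes (apart from the repeated endpoint). -/
def IsCycleIn (G : SubD n) (W : List (Fin n)) : Prop :=
  IsWalkIn G W ∧ 2 ≤ W.length ∧ W.head? = W.getLast? ∧ W.dropLast.Nodup

/-- `W` is a path in `G`: a walk with no repeated node. -/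
def IsPathIn (G : SubD n) (W : List (Fin n)) : Prop :=
  IsWalkIn G W ∧ W.Nodup

/-- `v` is reachable from `u` by a (possibly empty) walk in `G`. -/
def ReachIn (G : SubD n) (u v : Fin n) : Prop :=
  ∃ W, IsWalkIn G W ∧ W.head? = some u ∧ W.getLast? = some v

/-- `u` and `v` lie in the same strongly connected component of `G`. -/
def SccEq (G : SubD n) (u v : Fin n) : Prop := ReachIn G u v ∧ ReachIn G v u

/-- The node set of the s.c.c. of `u` in `G`. -/
def sccOf (G : SubD n) (u : Fin n) : Set (Fin n) := {v | SccEq G u v}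

/-- The s.c.c. of `u` in `G`, as a digraph. -/
def sccSub (G : SubD n) (u : Fin n) : SubD n :=
  ⟨sccOf G u, fun a b => G.edge a b ∧ a ∈ sccOf G u ∧ b ∈ sccOf G u⟩

/-- `H` is a subgraph of `G`. -/
def SubLE (H G : SubD n) : Prop := H.verts ⊆ G.verts ∧ ∀ u v, H.edge u v → G.edge u v

/-- `G` is completely reducible: there are no edges between distinct s.c.c.'s,
i.e. every edge lies inside an s.c.c. -/
def CompletelyReducible (G : SubD n) : Prop := ∀ u v, G.edge u v → ReachIn G v u

/-- `G` has no trivial s.c.c.: every node lies on a cycle of `G`. -/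
def NoTrivialScc (G : SubD n) : Prop := ∀ v ∈ G.verts, ∃ W, IsCycleIn G W ∧ v ∈ W

/-- `A` is irreducible: `𝒟(A)` is strongly connected. -/
def IrreducibleMat (A : MPMat n) : Prop := ∀ i j : Fin n, ReachIn (digr A) i j

/-- `W` is a closed walk at node `v` in `G`. -/
def IsClosedWalkAt (G : SubD n) (v : Fin n) (W : List (Fin n)) : Prop :=
  IsWalkIn G W ∧ W.head? = some v ∧ W.getLast? = some v

/-- The greatest common divisor of a set of naturals (0 for the empty set). -/
def setGcd (S : Set ℕ) : ℕ :=
  sInf {d | (∀ s ∈ S, d ∣ s) ∧ ∀ e, (∀ s ∈ S, e ∣ s) → e ∣ d}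

/-- The least common multiple of a set of naturals: the least positive common
multiple (0 if there is none). -/
def setLcm (S : Set ℕ) : ℕ := sInf {m | 0 < m ∧ ∀ s ∈ S, s ∣ m}

/-- The cyclicity of the s.c.c. of `v` in `G`: the gcd of the lengths of the
closed walks of `G` through `v` (0 if `v` lies on no nonempty closed walk). -/
def sccCyclicity (G : SubD n) (v : Fin n) : ℕ :=
  setGcd {l | 0 < l ∧ ∃ W, IsClosedWalkAt G v W ∧ elen W = l}

/-- The cyclicity of a digraph: the lcm of the cyclicities of its
(nontrivial) s.c.c.'s. -/
def graphCyclicity (G : SubD n) : ℕ :=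
  setLcm {c | ∃ v ∈ G.verts, c = sccCyclicity G v ∧ 0 < c}

/-- The walk `W` has mean weight `m`, i.e. `p(W) = l(W)·m` (finitely). -/
def meanIs (A : MPMat n) (W : List (Fin n)) (m : ℝ) : Prop :=
  walkWeight A W = (((elen W : ℝ) * m : ℝ) : WithBot ℝ)

/-- `lam` is the maximum cycle mean `λ(A)` of `A`: it is the mean of some
cycle of `𝒟(A)` and no cycle has a larger mean.  (Its existence is
equivalent to `𝒟(A)` containing a cycle, i.e. `λ(A) ≠ -∞`.) -/
def IsMaxCycleMean (A : MPMat n) (lam : ℝ) : Prop :=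
  (∃ W, IsCycleIn (digr A) W ∧ meanIs A W lam) ∧
  ∀ W m, IsCycleIn (digr A) W → meanIs A W m → m ≤ lam

/-- The set of critical nodes: nodes on some cycle of mean `λ(A)`. -/
def critNodes (A : MPMat n) (lam : ℝ) : Set (Fin n) :=
  {v | ∃ W, IsCycleIn (digr A) W ∧ meanIs A W lam ∧ v ∈ W}

/-- Critical edges: edges of some cycle of mean `λ(A)`. -/
def critEdges (A : MPMat n) (lam : ℝ) (u v : Fin n) : Prop :=
  ∃ W, IsCycleIn (digr A) W ∧ meanIs A W lam ∧ (u, v) ∈ W.zip W.tail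

/-- The critical graph `𝒞(A)`. -/
def critSub (A : MPMat n) (lam : ℝ) : SubD n := ⟨critNodes A lam, critEdges A lam⟩

/-- Add the real constant `c` to every entry. -/
def shiftMat (A : MPMat n) (c : ℝ) : MPMat n := fun i j => A i j + (c : WithBot ℝ)

/-- The max-plus Kleene star `X^* = I ⊕ X ⊕ X² ⊕ ⋯` (entrywise supremum). -/
def mpStar (X : MPMat n) : MPMat n := fun i j => ⨆ t : ℕ, mpPow X t i j

/-- The matrix `M = (((-λ)⊗A)^{γ(𝒢)})^*` used to define the CSR terms. -/
def csrM (A : MPMat n) (lam : ℝ) (G : SubD n) : MPMat n :=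
  mpStar (mpPow (shiftMat A (-lam)) (graphCyclicity G))

/-- The `C` term of the CSR expansion of `A` w.r.t. the subgraph `G`. -/
def csrC (A : MPMat n) (lam : ℝ) (G : SubD n) : MPMat n :=
  fun i j => if j ∈ G.verts then csrM A lam G i j else ⊥

/-- The `R` term of the CSR expansion of `A` w.r.t. the subgraph `G`. -/
def csrR (A : MPMat n) (lam : ℝ) (G : SubD n) : MPMat n :=
  fun i j => if i ∈ G.verts then csrM A lam G i j else ⊥

/-- The `S` term of the CSR expansion of `A` w.r.t. the subgraph `G`. -/
def csrS (A : MPMat n) (lam : ℝ) (G : SubD n) : MPMat n :=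
  fun i j => if G.edge i j then A i j + ((-lam : ℝ) : WithBot ℝ) else ⊥

/-- The matrix `C S^t R`. -/
def csr (A : MPMat n) (lam : ℝ) (G : SubD n) (t : ℕ) : MPMat n :=
  mpMul (mpMul (csrC A lam G) (mpPow (csrS A lam G) t)) (csrR A lam G)

/-- `G` is a representing subgraph of the critical graph `crit`: a completely
reducible subgraph (with no trivial s.c.c.) such that every s.c.c. of `crit`
contains exactly one s.c.c. of `G`. -/
structure IsRepresenting (crit G : SubD n) : Prop where
  le : SubLE G crit
  compRed : CompletelyReducible G
  noTriv : NoTrivialScc G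
  covers : ∀ u ∈ crit.verts, ∃ v ∈ G.verts, SccEq crit u v
  unique : ∀ v ∈ G.verts, ∀ w ∈ G.verts, SccEq crit v w → SccEq G v w

/-- `B` is subordinate to `A`: obtained from `A` by setting some entries to `-∞`. -/
def Subordinate (B A : MPMat n) : Prop := ∀ i j, B i j = A i j ∨ B i j = ⊥

/-- Set to `-∞` all entries in the rows and columns indexed by `S`. -/
def zeroRC (A : MPMat n) (S : Set (Fin n)) : MPMat n :=
  fun i j => if i ∈ S ∨ j ∈ S then ⊥ else A i j

/-- The Nachtigall scheme: zero out the rows and columns of critical nodes. -/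
def bN (A : MPMat n) (lam : ℝ) : MPMat n := zeroRC A (critNodes A lam)

/-- `V` is a max-balancing of `A`: `V = D⁻¹((-λ(A))⊗A)D` with all entries `≤ 0`,
entries `0` on critical edges, and every edge of `𝒟(V)` lies on a cycle all of
whose edges have weight at least that of the given edge (cycle cover). -/
def IsMaxBalancing (A : MPMat n) (lam : ℝ) (V : MPMat n) : Prop :=
  (∃ d : Fin n → ℝ, ∀ i j, V i j = A i j + ((d j - d i - lam : ℝ) : WithBot ℝ)) ∧
  (∀ i j, V i j ≤ (0 : WithBot ℝ)) ∧
  (∀ i j, critEdges A lam i j → V i j = (0 : WithBot ℝ)) ∧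
  (∀ i j, V i j ≠ ⊥ →
    ∃ W, IsCycleIn (digr V) W ∧ (i, j) ∈ W.zip W.tail ∧ ∀ p ∈ W.zip W.tail, V i j ≤ V p.1 p.2)

/-- The Hartmann-Arguelles threshold graph `Θ^{ha}(μ)`: induced by the edges
with `v_{ij} ≥ μ`; by convention `Θ^{ha}(-∞) = 𝒟(A)`. -/
def thrHA (A V : MPMat n) (μ : WithBot ℝ) : SubD n :=
  if μ = ⊥ then digr A
  else ⟨{u | ∃ w, μ ≤ V u w ∨ μ ≤ V w u}, fun u v => μ ≤ V u v⟩

/-- The cycle threshold graph `Θ^{ct}(μ)`: induced by all nodes and edges of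
cycles of mean weight `≥ μ`; by convention `Θ^{ct}(-∞) = 𝒟(A)`. -/
def thrCT (A : MPMat n) (μ : WithBot ℝ) : SubD n :=
  if μ = ⊥ then digr A
  else ⟨{v | ∃ W m, IsCycleIn (digr A) W ∧ meanIs A W m ∧ μ ≤ (m : WithBot ℝ) ∧ v ∈ W},
        fun u v => ∃ W m, IsCycleIn (digr A) W ∧ meanIs A W m ∧ μ ≤ (m : WithBot ℝ) ∧
          (u, v) ∈ W.zip W.tail⟩

/-- `Θ` has an s.c.c. containing no s.c.c. of `crit`. -/
def HasFreeScc (Θ crit : SubD n) : Prop :=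
  ∃ u ∈ Θ.verts, ¬ ∃ w ∈ crit.verts, sccOf crit w ⊆ sccOf Θ u

/-- `μ` is the greatest value `≤ λ(A)` satisfying `P` (or `-∞` if there is
no such value). -/
def IsThrMax (P : WithBot ℝ → Prop) (lam : ℝ) (μ : WithBot ℝ) : Prop :=
  (μ ≤ (lam : WithBot ℝ) ∧ P μ ∧ ∀ μ', μ' ≤ (lam : WithBot ℝ) → P μ' → μ' ≤ μ) ∨
  (μ = ⊥ ∧ ∀ μ', μ' ≤ (lam : WithBot ℝ) → ¬ P μ')

/-- `μ = μ^{ha}` for the max-balancing `V` of `A`. -/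
def IsMuHA (A : MPMat n) (lam : ℝ) (V : MPMat n) (μ : WithBot ℝ) : Prop :=
  IsThrMax (fun m => HasFreeScc (thrHA A V m) (critSub A lam)) lam μ

/-- `μ = μ^{ct}` for `A`. -/
def IsMuCT (A : MPMat n) (lam : ℝ) (μ : WithBot ℝ) : Prop :=
  IsThrMax (fun m => HasFreeScc (thrCT A m) (critSub A lam)) lam μ

/-- The union of the s.c.c.'s of `Θ` intersecting the node set `crit`. -/
def unionSccMeeting (Θ : SubD n) (crit : Set (Fin n)) : Set (Fin n) :=
  {v | v ∈ Θ.verts ∧ ∃ w ∈ crit, SccEq Θ v w}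

/-- The node set `𝒢^{ha}` of the Hartmann-Arguelles scheme. -/
def haNodes (A V : MPMat n) (lam : ℝ) (μ : WithBot ℝ) : Set (Fin n) :=
  unionSccMeeting (thrHA A V μ) (critNodes A lam)

/-- The matrix `B^{HA}` of the Hartmann-Arguelles scheme. -/
def bHA (A V : MPMat n) (lam : ℝ) (μ : WithBot ℝ) : MPMat n :=
  zeroRC A (haNodes A V lam μ)

/-- The node set `𝒢^{ct}` of the cycle threshold scheme. -/
def ctNodes (A : MPMat n) (lam : ℝ) (μ : WithBot ℝ) : Set (Fin n) :=
  unionSccMeeting (thrCT A μ) (critNodes A lam)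

/-- The matrix `B^{ct}` of the cycle threshold scheme. -/
def bCT (A : MPMat n) (lam : ℝ) (μ : WithBot ℝ) : MPMat n :=
  zeroRC A (ctNodes A lam μ)

/-- The graph `𝒢^{ct}`: the union of the s.c.c.'s of `Θ^{ct}(μ^{ct})`
intersecting `𝒞(A)`, as a digraph. -/
def ctSub (A : MPMat n) (lam : ℝ) (μ : WithBot ℝ) : SubD n :=
  ⟨ctNodes A lam μ,
   fun u v => (thrCT A μ).edge u v ∧ u ∈ ctNodes A lam μ ∧ v ∈ ctNodes A lam μ⟩

/-- The circumference of `G`: the greatest length of a cycle of `G`. -/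
def circumf (G : SubD n) : ℕ := sSup {l | ∃ W, IsCycleIn G W ∧ W.length = l + 1}

/-- The cab driver's diameter of `G`: the greatest length of a path of `G`. -/
def cabDiam (G : SubD n) : ℕ := sSup {l | ∃ W, IsPathIn G W ∧ W.length = l + 1}

/-- The girth of the s.c.c. of `v` in `G`: the least length of a cycle lying
in the s.c.c. of `v`. -/
def sccGirth (G : SubD n) (v : Fin n) : ℕ :=
  sInf {l | 0 < l ∧ ∃ W, IsCycleIn G W ∧ W.length = l + 1 ∧ ∀ u ∈ W, SccEq G v u}

/-- The max-girth of `G`: the greatest girth of an s.c.c. of `G`. -/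
def maxGirth (G : SubD n) : ℕ := sSup {g | ∃ v ∈ G.verts, 0 < g ∧ g = sccGirth G v}

/-- The max-cyclicity of `G`: the greatest cyclicity of an s.c.c. of `G`. -/
def maxCyclicity (G : SubD n) : ℕ := sSup {c | ∃ v ∈ G.verts, 0 < c ∧ c = sccCyclicity G v}

/-- The Wielandt number: `Wi(n) = (n-1)² + 1` for `n > 1`, `Wi(1) = 0`. -/
def wielandt (k : ℕ) : ℕ := if k ≤ 1 then 0 else (k - 1) ^ 2 + 1

/-- The set of finite entries of `A`. -/
def finEntries (A : MPMat n) : Set ℝ := {x | ∃ i j, A i j = (x : WithBot ℝ)}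

/-- The least finite entry of `A`. -/
def minEnt (A : MPMat n) : ℝ := sInf (finEntries A)

/-- The greatest finite entry of `A`. -/
def maxEnt (A : MPMat n) : ℝ := sSup (finEntries A)

/-- `‖A‖`: the difference between the greatest and least finite entries. -/
def matNorm (A : MPMat n) : ℝ := maxEnt A - minEnt A

/-- `n_B`: the size of the smallest square submatrix of `B` containing all
finite entries of `B`. -/
def nB (B : MPMat n) : ℕ := Set.ncard {i | ∃ j, B i j ≠ ⊥ ∨ B j i ≠ ⊥}

/-- `‖v‖`: the difference between the greatest and least entries of `v`. -/
def vecNorm (v : Fin n → ℝ) : ℝ := sSup (Set.range v) - sInf (Set.range v)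

/-- The exploration penalty `ep^γ(i)` (w.r.t. the graph `crit`): the least `T`
such that for every multiple `t` of `γ` with `t ≥ T` there is a closed walk of
length `t` at `i` in `crit`. -/
def epAt (crit : SubD n) (γ : ℕ) (i : Fin n) : ℕ :=
  sInf {T | ∀ t, γ ∣ t → T ≤ t → ∃ W, IsClosedWalkAt crit i W ∧ elen W = t}

/-- The exploration penalty `ep^γ(S)`: the maximum of `ep^γ(i)` over `i ∈ S`. -/
def epOn (crit : SubD n) (γ : ℕ) (S : Set (Fin n)) : ℕ := sSup {e | ∃ i ∈ S, e = epAt crit γ i}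

/-- `ep(𝒞(A))`: the maximum over the s.c.c.'s `𝒞_l` of `crit` of
`ep^{γ(𝒞_l)}(𝒞_l)`. -/
def epCrit (crit : SubD n) : ℕ :=
  sSup {e | ∃ i ∈ crit.verts, e = epAt crit (sccCyclicity crit i) i}

/-- The weak CSR expansion `A^t = λ^{⊗t}⊗(CS^tR) ⊕ B^t` holds at time `t`
(with CSR terms taken w.r.t. the subgraph `G`). -/
def weakCSReq (A B : MPMat n) (lam : ℝ) (G : SubD n) (t : ℕ) : Prop :=
  ∀ i j, mpPow A t i j = max (csr A lam G t i j + (((t : ℝ) * lam : ℝ) : WithBot ℝ)) (mpPow B t i j)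

/-- The domination `λ^{⊗t}⊗(CS^tR) ≥ B^t` holds at time `t`. -/
def T2eq (A B : MPMat n) (lam : ℝ) (G : SubD n) (t : ℕ) : Prop :=
  ∀ i j, mpPow B t i j ≤ csr A lam G t i j + (((t : ℝ) * lam : ℝ) : WithBot ℝ)

/-- The domination `λ^{⊗t}⊗(CS^tRv) ≥ B^t v` holds at time `t`. -/
def T2veq (A B : MPMat n) (lam : ℝ) (G : SubD n) (v : Fin n → ℝ) (t : ℕ) : Prop :=
  ∀ i, mpMulVec (mpPow B t) (fun j => (v j : WithBot ℝ)) i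
      ≤ mpMulVec (csr A lam G t) (fun j => (v j : WithBot ℝ)) i + (((t : ℝ) * lam : ℝ) : WithBot ℝ)

/-- One step of removing a (nonempty) closed subwalk from a walk. -/
def RemoveStep (W V : List (Fin n)) : Prop :=
  ∃ (pre mid post : List (Fin n)) (x : Fin n),
    W = pre ++ x :: mid ++ x :: post ∧ V = pre ++ x :: post

/-- One step of inserting a cycle of `C` into a walk (at an occurrence of a
node of that cycle). -/
def InsertStep (C : SubD n) (W V : List (Fin n)) : Prop :=
  ∃ (pre post mid : List (Fin n)) (x : Fin n),
    W = pre ++ x :: post ∧ V = pre ++ x :: mid ++ x :: post ∧ IsCycleIn C (x :: mid ++ [x])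

/-- `V` is obtained from `W` by removing cycles. -/
def RemOnly : List (Fin n) → List (Fin n) → Prop := Relation.ReflTransGen RemoveStep

/-- `V` is obtained from `W` by removing cycles and possibly inserting cycles
of `C`. -/
def RemIns (C : SubD n) : List (Fin n) → List (Fin n) → Prop :=
  Relation.ReflTransGen fun W V => RemoveStep W V ∨ InsertStep C W V

/-- `V` is obtained from `W` by removing at least one cycle and possibly
inserting cycles of `C`. -/
def RemInsStrict (C : SubD n) (W V : List (Fin n)) : Prop :=
  ∃ W₁ W₂, RemIns C W W₁ ∧ RemoveStep W₁ W₂ ∧ RemIns C W₂ V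

/-- `T` witnesses the cycle removal threshold `T_cr^γ(C) ≤ T` in the digraph
`G`: every walk of `G` through `C` of length `≥ T` can be reduced (removing
cycles, possibly inserting cycles of `C`) to a walk through `C` with the same
endpoints, the same length mod `γ`, and length `≤ T`. -/
def TcrProp (G C : SubD n) (γ T : ℕ) : Prop :=
  ∀ W, IsWalkIn G W → (∃ v ∈ C.verts, v ∈ W) → T ≤ elen W →
    ∃ V, RemIns C W V ∧ IsWalkIn G V ∧ (∃ v ∈ C.verts, v ∈ V) ∧
      V.head? = W.head? ∧ V.getLast? = W.getLast? ∧ elen V ≡ elen W [MOD γ] ∧ elen V ≤ T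

/-- `T` witnesses the strict cycle removal threshold `T̃_cr^γ(C) ≤ T`. -/
def TcrStrictProp (G C : SubD n) (γ T : ℕ) : Prop :=
  ∀ W, IsWalkIn G W → (∃ v ∈ C.verts, v ∈ W) → T ≤ elen W →
    ∃ V, RemInsStrict C W V ∧ IsWalkIn G V ∧ (∃ v ∈ C.verts, v ∈ V) ∧
      V.head? = W.head? ∧ V.getLast? = W.getLast? ∧ elen V ≡ elen W [MOD γ] ∧ elen V ≤ T

/-- The cycle removal threshold `T_cr^γ(C)` of the subgraph `C` in `G`. -/
def Tcr (G C : SubD n) (γ : ℕ) : ℕ := sInf {T | TcrProp G C γ T}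

/-- The strict cycle removal threshold `T̃_cr^γ(C)` of the subgraph `C` in `G`. -/
def TcrStrict (G C : SubD n) (γ : ℕ) : ℕ := sInf {T | TcrStrictProp G C γ T}

/-- The subgraph formed by the nodes and edges of the walk `W`. -/
def cycleSub (W : List (Fin n)) : SubD n :=
  ⟨{v | v ∈ W}, fun a b => (a, b) ∈ W.zip W.tail⟩

/-- The single-node subgraph `{i}` (with no edges). -/
def singleSub (i : Fin n) : SubD n := ⟨{i}, fun _ _ => False⟩

/-- `λ(M)` as an element of `ℝmax` (`-∞` if `𝒟(M)` has no cycle). -/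
def lamW (M : MPMat n) : WithBot ℝ :=
  sSup {x : WithBot ℝ | ∃ W m, IsCycleIn (digr M) W ∧ meanIs M W m ∧ x = (m : WithBot ℝ)}

end MaxPlus

namespace MaxPlus

variable {n : ℕ}

-- ### basic preservation lemmas for cycle removal

lemma RemoveStep.sublist' {W V : List (Fin n)} (h : RemoveStep W V) : V.Sublist W := by
  obtain ⟨pre, mid, post, x, rfl, rfl⟩ := h
  exact (List.sublist_append_left pre (x :: mid)).append_right (x :: post)

lemma RemoveStep.head?_eq {W V : List (Fin n)} (h : RemoveStep W V) : V.head? = W.head? := by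
  obtain ⟨pre, mid, post, x, rfl, rfl⟩ := h
  cases pre <;> simp

lemma RemoveStep.getLast?_eq {W V : List (Fin n)} (h : RemoveStep W V) :
    V.getLast? = W.getLast? := by
  obtain ⟨pre, mid, post, x, rfl, rfl⟩ := h
  rcases post.eq_nil_or_concat with rfl | ⟨post', y, rfl⟩
  · rw [show pre ++ x :: mid ++ x :: ([] : List (Fin n)) = (pre ++ x :: mid) ++ [x] by simp,
      show pre ++ x :: ([] : List (Fin n)) = pre ++ [x] by simp,
      List.getLast?_concat, List.getLast?_concat]
  · simp only [List.concat_eq_append]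
    rw [show pre ++ x :: mid ++ x :: (post' ++ [y]) = (pre ++ x :: mid ++ x :: post') ++ [y] by
        simp,
      show pre ++ x :: (post' ++ [y]) = (pre ++ x :: post') ++ [y] by simp,
      List.getLast?_concat, List.getLast?_concat]

lemma RemoveStep.chain' {W V : List (Fin n)} {e : Fin n → Fin n → Prop}
    (h : RemoveStep W V) (hW : W.Chain' e) : V.Chain' e := by
  obtain ⟨pre, mid, post, x, rfl, rfl⟩ := h
  have hW' : ((pre ++ x :: mid) ++ x :: post).Chain' e := by simpa using hW
  obtain ⟨h1, h2, h3⟩ := List.isChain_append.1 hW'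
  obtain ⟨h4, _, h6⟩ := List.isChain_append.1 h1
  refine List.isChain_append.2 ⟨h4, h2, ?_⟩
  intro a ha b hb
  have hb' : x = b := by simpa using hb
  subst hb'
  exact h6 a ha x (by simp)

lemma RemoveStep.ne_nil {W V : List (Fin n)} (h : RemoveStep W V) : V ≠ [] := by
  obtain ⟨pre, mid, post, x, rfl, rfl⟩ := h
  simp

lemma RemOnly.sublist' {W V : List (Fin n)} (h : RemOnly W V) : V.Sublist W := by
  induction h with
  | refl => exact List.Sublist.refl _
  | tail _ h ih => exact h.sublist'.trans ih

lemma RemOnly.head?_eq {W V : List (Fin n)} (h : RemOnly W V) : V.head? = W.head? := by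
  induction h with
  | refl => rfl
  | tail _ h ih => exact h.head?_eq.trans ih

lemma RemOnly.getLast?_eq {W V : List (Fin n)} (h : RemOnly W V) : V.getLast? = W.getLast? := by
  induction h with
  | refl => rfl
  | tail _ h ih => exact h.getLast?_eq.trans ih

lemma RemOnly.chain' {W V : List (Fin n)} {e : Fin n → Fin n → Prop}
    (h : RemOnly W V) (hW : W.Chain' e) : V.Chain' e := by
  induction h with
  | refl => exact hW
  | tail _ h ih => exact h.chain' ih

lemma RemOnly.ne_nil {W V : List (Fin n)} (h : RemOnly W V) (hW : W ≠ []) : V ≠ [] := by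
  induction h with
  | refl => exact hW
  | tail _ h _ => exact h.ne_nil

lemma RemOnly.walkIn {G : SubD n} {W V : List (Fin n)} (h : RemOnly W V)
    (hW : IsWalkIn G W) : IsWalkIn G V :=
  ⟨h.ne_nil hW.1, fun v hv => hW.2.1 v (h.sublist'.mem hv), h.chain' hW.2.2⟩

lemma RemoveStep.append_left (Z : List (Fin n)) {W V : List (Fin n)} (h : RemoveStep W V) :
    RemoveStep (Z ++ W) (Z ++ V) := by
  obtain ⟨pre, mid, post, x, rfl, rfl⟩ := h
  exact ⟨Z ++ pre, mid, post, x, by simp, by simp⟩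

lemma RemOnly.append_left (Z : List (Fin n)) {W V : List (Fin n)} (h : RemOnly W V) :
    RemOnly (Z ++ W) (Z ++ V) :=
  Relation.ReflTransGen.lift (fun L => Z ++ L) (fun _ _ (hab : RemoveStep _ _) => hab.append_left Z) _ _ h

lemma RemoveStep.append_right (Z : List (Fin n)) {W V : List (Fin n)} (h : RemoveStep W V) :
    RemoveStep (W ++ Z) (V ++ Z) := by
  obtain ⟨pre, mid, post, x, rfl, rfl⟩ := h
  exact ⟨pre, mid, post ++ Z, x, by simp, by simp⟩

lemma RemOnly.append_right (Z : List (Fin n)) {W V : List (Fin n)} (h : RemOnly W V) :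
    RemOnly (W ++ Z) (V ++ Z) :=
  Relation.ReflTransGen.lift (fun L => L ++ Z) (fun _ _ (hab : RemoveStep _ _) => hab.append_right Z) _ _ h

-- ### finding duplicates

lemma exists_dup_of_not_nodup : ∀ (Y : List (Fin n)), ¬ Y.Nodup →
    ∃ pre mid post x, Y = pre ++ x :: mid ++ x :: post := by
  intro Y
  induction Y with
  | nil => intro h; exact absurd List.nodup_nil h
  | cons y Y ih =>
    intro h
    rw [List.nodup_cons] at h
    push_neg at h
    by_cases hy : y ∈ Y
    · obtain ⟨s, t, rfl⟩ := List.append_of_mem hy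
      exact ⟨[], s, t, y, by simp⟩
    · obtain ⟨pre, mid, post, x, rfl⟩ := ih (h hy)
      exact ⟨y :: pre, mid, post, x, by simp⟩

lemma not_nodup_of_card_lt (U : Finset (Fin n)) (Y : List (Fin n))
    (hmem : ∀ v ∈ Y, v ∈ U) (hlen : U.card < Y.length) : ¬ Y.Nodup := by
  intro hnd
  have h1 : Y.toFinset.card = Y.length := List.toFinset_card_of_nodup hnd
  have h2 : Y.toFinset ⊆ U := fun v hv => hmem v (List.mem_toFinset.1 hv)
  have := Finset.card_le_card h2
  omega

/-- A duplicate within the first `U.card + 1` entries. -/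
lemma chop (U : Finset (Fin n)) (X : List (Fin n))
    (hmem : ∀ v ∈ X, v ∈ U) (hlen : U.card + 1 ≤ X.length) :
    ∃ pre mid post x, X = pre ++ x :: mid ++ x :: post ∧
      pre.length + (mid.length + 1) ≤ U.card := by
  set Y := X.take (U.card + 1) with hY
  have hYlen : Y.length = U.card + 1 := by
    rw [hY, List.length_take]; omega
  have hnd : ¬ Y.Nodup := not_nodup_of_card_lt U Y
    (fun v hv => hmem v ((X.take_sublist _).mem hv)) (by omega)
  obtain ⟨pre, mid, post, x, hdec⟩ := exists_dup_of_not_nodup Y hnd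
  refine ⟨pre, mid, post ++ X.drop (U.card + 1), x, ?_, ?_⟩
  · conv_lhs => rw [← List.take_append_drop (U.card + 1) X]
    rw [← hY, hdec]; simp
  · have := congrArg List.length hdec
    simp only [hYlen, List.length_append, List.length_cons] at this
    omega

-- ### prefix sums of cycle-length lists

lemma run_sum (cs : List ℕ) {i j : ℕ} (h : i ≤ j) :
    ((cs.take j).drop i).sum + (cs.take i).sum = (cs.take j).sum := by
  conv_rhs => rw [← List.take_append_drop i (cs.take j)]
  rw [List.sum_append, List.take_take, Nat.min_eq_left h, Nat.add_comm]

lemma sum_take_mono (cs : List ℕ) {i j : ℕ} (h : i ≤ j) :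
    (cs.take i).sum ≤ (cs.take j).sum := by
  rw [← run_sum cs h]; omega

lemma sum_take_strict (cs : List ℕ) (h1 : ∀ c ∈ cs, 1 ≤ c) {i j : ℕ} (hij : i < j)
    (hj : j ≤ cs.length) : (cs.take i).sum < (cs.take j).sum := by
  rw [← run_sum cs hij.le]
  have hlen : ((cs.take j).drop i).length = j - i := by
    rw [List.length_drop, List.length_take]; omega
  have hne : (cs.take j).drop i ≠ [] := by
    intro h; rw [h] at hlen; simp at hlen; omega
  obtain ⟨c, rest, hcr⟩ := List.exists_cons_of_ne_nil hne
  have hcmem : c ∈ cs := by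
    have : c ∈ (cs.take j).drop i := by rw [hcr]; exact List.mem_cons_self
    exact (cs.take_sublist j).mem ((List.drop_sublist i _).mem this)
  have hc : 1 ≤ c := h1 c hcmem
  rw [hcr]
  simp only [List.sum_cons]
  omega

-- ### harvesting cycles from a walk

lemma harvest (U : Finset (Fin n)) :
    ∀ (k : ℕ) (X : List (Fin n)), (∀ v ∈ X, v ∈ U) → (k ≠ 0 → k * U.card + 1 ≤ X.length) →
    ∃ cs : List ℕ, cs.length = k ∧ (∀ c ∈ cs, 1 ≤ c) ∧
      ∀ i j, i ≤ j → j ≤ k →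
        ∃ V, RemOnly X V ∧ V.length + ((cs.take j).drop i).sum = X.length := by
  intro k
  induction k with
  | zero =>
    intro X _ _
    refine ⟨[], rfl, by simp, fun i j hij hj => ?_⟩
    have hi : i = 0 := by omega
    have hjj : j = 0 := by omega
    subst hi; subst hjj
    exact ⟨X, Relation.ReflTransGen.refl, by simp⟩
  | succ k ih =>
    intro X hmem hlen
    have hlen1 : (k + 1) * U.card + 1 ≤ X.length := hlen (by omega)
    have hcard : U.card ≤ (k + 1) * U.card := Nat.le_mul_of_pos_left U.card (Nat.succ_pos k)
    obtain ⟨pre, mid, post, x, hdec, hbd⟩ := chop U X hmem (by omega)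
    set R := x :: post with hR
    have hXlen : X.length = pre.length + (mid.length + 1) + R.length := by
      rw [hdec, hR]; simp; omega
    have hmemR : ∀ v ∈ R, v ∈ U := by
      intro v hv
      refine hmem v ?_
      rw [hdec, hR] at *
      simp only [List.mem_append, List.mem_cons] at hv ⊢
      tauto
    have hlenR : k ≠ 0 → k * U.card + 1 ≤ R.length := by
      intro _
      have hmul : (k + 1) * U.card = k * U.card + U.card := by ring
      omega
    obtain ⟨cs', hcs'len, hcs'pos, hsel⟩ := ih R hmemR hlenR
    refine ⟨(mid.length + 1) :: cs', by simp [hcs'len], ?_, ?_⟩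
    · intro c hc
      rcases List.mem_cons.1 hc with rfl | hc
      · omega
      · exact hcs'pos c hc
    · intro i j hij hj
      have hXR : X = (pre ++ x :: mid) ++ R := by rw [hdec, hR]
      match i, j with
      | 0, 0 =>
        refine ⟨X, Relation.ReflTransGen.refl, ?_⟩
        simp
      | 0, (j' + 1) =>
        obtain ⟨V', hrem', hlen'⟩ := hsel 0 j' (Nat.zero_le _) (by omega)
        have hhead : V'.head? = some x := by rw [hrem'.head?_eq, hR]; rfl
        obtain ⟨V'', rfl⟩ : ∃ V'', V' = x :: V'' := by
          cases V' with
          | nil => simp at hhead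
          | cons a t =>
            simp only [List.head?_cons, Option.some.injEq] at hhead
            subst hhead; exact ⟨t, rfl⟩
        refine ⟨pre ++ x :: V'', ?_, ?_⟩
        · have step1 : RemOnly X ((pre ++ x :: mid) ++ (x :: V'')) := by
            rw [hXR]; exact hrem'.append_left _
          refine step1.tail ?_
          exact ⟨pre, mid, V'', x, by simp, by simp⟩
        · rw [List.take_succ_cons, List.drop_zero, List.sum_cons]
          rw [List.drop_zero] at hlen'
          have hVlen : (x :: V'').length = V''.length + 1 := by simp
          have hRlen : R.length = post.length + 1 := by rw [hR]; simp
          simp only [List.length_append, List.length_cons] at *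
          omega
      | (i' + 1), (j' + 1) =>
        obtain ⟨V', hrem', hlen'⟩ := hsel i' j' (by omega) (by omega)
        refine ⟨(pre ++ x :: mid) ++ V', ?_, ?_⟩
        · rw [hXR]; exact hrem'.append_left _
        · rw [List.take_succ_cons, List.drop_succ_cons]
          simp only [List.length_append, List.length_cons] at *
          omega

-- ### splitting a walk at the first node of `C`

lemma split_first (Cs : Set (Fin n)) :
    ∀ (W : List (Fin n)), (∃ v ∈ Cs, v ∈ W) →
    ∃ P g S, W = P ++ g :: S ∧ g ∈ Cs ∧ ∀ v ∈ P, v ∉ Cs := by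
  intro W
  induction W with
  | nil => rintro ⟨v, _, hv⟩; exact absurd hv List.not_mem_nil
  | cons w W ih =>
    rintro ⟨v, hvC, hvW⟩
    by_cases hw : w ∈ Cs
    · exact ⟨[], w, W, by simp, hw, by simp⟩
    · have hvW' : v ∈ W := by
        rcases List.mem_cons.1 hvW with rfl | h
        · exact absurd hvC hw
        · exact h
      obtain ⟨P, g, S, rfl, hg, hP⟩ := ih ⟨v, hvC, hvW'⟩
      refine ⟨w :: P, g, S, by simp, hg, ?_⟩
      intro u hu
      rcases List.mem_cons.1 hu with rfl | h
      · exact hw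
      · exact hP u h

end MaxPlus


namespace MaxPlus

variable {n : ℕ}

/-- Core step: a long walk through `C` admits a strictly shorter reduction with the
same length mod `γ`, still through `C`. -/
lemma reduce_once (G C : SubD n) (γ : ℕ) (hγ : 1 ≤ γ) (W : List (Fin n))
    (hvis : ∃ v ∈ C.verts, v ∈ W)
    (hlen : γ * n + (n - C.verts.ncard) ≤ elen W) :
    ∃ V, RemOnly W V ∧ (∃ v ∈ C.verts, v ∈ V) ∧ elen V < elen W ∧
      elen V ≡ elen W [MOD γ] := by
  obtain ⟨P, g, S, rfl, hgC, hP⟩ := split_first C.verts W hvis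
  have hn : 0 < n := g.pos
  have hCfin : C.verts.Finite := Set.toFinite _
  have hn₁ : C.verts.ncard = hCfin.toFinset.card := Set.ncard_eq_toFinset_card _ hCfin
  set U₁ : Finset (Fin n) := hCfin.toFinsetᶜ with hU₁def
  have hν : U₁.card = n - hCfin.toFinset.card := by
    rw [hU₁def, Finset.card_compl, Fintype.card_fin]
  have helen : elen (P ++ g :: S) = P.length + S.length := by
    simp only [elen, List.length_append, List.length_cons]
    omega
  -- prefix harvest
  obtain ⟨kp, hkpdef⟩ : ∃ kp, kp = (P.length - 1) / U₁.card := ⟨_, rfl⟩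
  have hq_ub : P.length ≤ (kp + 1) * U₁.card := by
    by_cases hq0 : P.length = 0
    · simp [hq0]
    · by_cases hν0 : U₁.card = 0
      · exfalso
        obtain ⟨p0, hp0⟩ := List.exists_mem_of_ne_nil P
          (by intro h; rw [h] at hq0; exact hq0 rfl)
        have hp0U : p0 ∈ U₁ := by
          rw [hU₁def, Finset.mem_compl, Set.Finite.mem_toFinset]
          exact hP p0 hp0
        rw [Finset.card_eq_zero] at hν0
        rw [hν0] at hp0U
        exact absurd hp0U (Finset.notMem_empty p0)
      · have hdm := Nat.div_add_mod (P.length - 1) U₁.card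
        have hmlt : (P.length - 1) % U₁.card < U₁.card :=
          Nat.mod_lt _ (Nat.pos_of_ne_zero hν0)
        have hq1 : 1 ≤ P.length := Nat.pos_of_ne_zero hq0
        calc P.length = (P.length - 1) + 1 := by omega
          _ = U₁.card * ((P.length - 1) / U₁.card) + (P.length - 1) % U₁.card + 1 := by
              rw [hdm]
          _ ≤ U₁.card * ((P.length - 1) / U₁.card) + U₁.card := by omega
          _ = ((P.length - 1) / U₁.card + 1) * U₁.card := by ring
          _ = (kp + 1) * U₁.card := by rw [hkpdef]
  have hkp_guard : kp ≠ 0 → kp * U₁.card + 1 ≤ P.length := by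
    intro hkp0
    have hq0 : P.length ≠ 0 := by
      intro h
      rw [hkpdef, h] at hkp0
      simp at hkp0
    have hle : kp * U₁.card ≤ P.length - 1 := by
      rw [hkpdef]; exact Nat.div_mul_le_self _ _
    omega
  obtain ⟨csP, hcsPlen, hcsPpos, hselP⟩ := harvest U₁ kp P
    (fun v hv => by
      rw [hU₁def, Finset.mem_compl, Set.Finite.mem_toFinset]
      exact hP v hv)
    hkp_guard
  -- suffix harvest
  obtain ⟨ks, hksdef⟩ : ∃ ks, ks = S.length / n := ⟨_, rfl⟩
  have hks_guard : ks ≠ 0 → ks * (Finset.univ : Finset (Fin n)).card + 1 ≤ (g :: S).length := by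
    intro _
    have hle : ks * n ≤ S.length := by rw [hksdef]; exact Nat.div_mul_le_self _ _
    simp only [Finset.card_univ, Fintype.card_fin, List.length_cons]
    omega
  obtain ⟨csS, hcsSlen, hcsSpos, hselS⟩ := harvest Finset.univ ks (g :: S)
    (fun v _ => Finset.mem_univ v) hks_guard
  have hs_ub : S.length + 1 ≤ (ks + 1) * n := by
    have hdm := Nat.div_add_mod S.length n
    have hmlt : S.length % n < n := Nat.mod_lt _ hn
    calc S.length + 1 = n * (S.length / n) + S.length % n + 1 := by rw [hdm]
      _ ≤ n * (S.length / n) + n := by omega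
      _ = (S.length / n + 1) * n := by ring
      _ = (ks + 1) * n := by rw [hksdef]
  have hcsSlen' : csS.length = ks := by
    simpa [Finset.card_univ, Fintype.card_fin] using hcsSlen
  -- counting: γ ≤ kp + ks
  have hcount : γ ≤ kp + ks := by
    have h1 : U₁.card ≤ n := by omega
    have hL : γ * n + U₁.card ≤ P.length + S.length := by
      rw [helen] at hlen
      omega
    have e1 : (kp + 1) * U₁.card = kp * U₁.card + U₁.card := by ring
    have e2 : (ks + 1) * n = ks * n + n := by ring
    have e3 : (kp + ks + 1) * n = kp * n + ks * n + n := by ring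
    have e4 : kp * U₁.card ≤ kp * n := Nat.mul_le_mul_left kp h1
    have e5 : γ * n < (kp + ks + 1) * n := by omega
    have := Nat.lt_of_mul_lt_mul_right e5
    omega
  -- pigeonhole on partial sums
  set F : ℕ → ℕ := fun t => (csP.take (min t kp)).sum + (csS.take (t - kp)).sum with hFdef
  have hpig : ∃ a b, a < b ∧ b ≤ γ ∧ F a % γ = F b % γ := by
    have hcard : (Finset.range γ).card < (Finset.range (γ + 1)).card := by simp
    have hmaps : ∀ t ∈ Finset.range (γ + 1), F t % γ ∈ Finset.range γ :=
      fun t _ => Finset.mem_range.2 (Nat.mod_lt _ hγ)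
    obtain ⟨a, ha, b, hb, hab, heq⟩ :=
      Finset.exists_ne_map_eq_of_card_lt_of_maps_to hcard hmaps
    rcases lt_or_gt_of_ne hab with h | h
    · exact ⟨a, b, h, Nat.lt_succ_iff.1 (Finset.mem_range.1 hb), heq⟩
    · exact ⟨b, a, h, Nat.lt_succ_iff.1 (Finset.mem_range.1 ha), heq.symm⟩
  obtain ⟨a, b, hab, hbγ, hFeq⟩ := hpig
  have hbk : b ≤ kp + ks := hbγ.trans hcount
  -- instantiate the selections
  obtain ⟨VP, hremP, hlenP⟩ := hselP (min a kp) (min b kp)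
    (min_le_min hab.le le_rfl) (Nat.min_le_right _ _)
  obtain ⟨VS, hremS, hlenS⟩ := hselS (a - kp) (b - kp)
    (Nat.sub_le_sub_right hab.le kp) (by omega)
  set rP := ((csP.take (min b kp)).drop (min a kp)).sum with hrPdef
  set rS := ((csS.take (b - kp)).drop (a - kp)).sum with hrSdef
  have hrsP : rP + (csP.take (min a kp)).sum = (csP.take (min b kp)).sum :=
    run_sum _ (min_le_min hab.le le_rfl)
  have hrsS : rS + (csS.take (a - kp)).sum = (csS.take (b - kp)).sum :=
    run_sum _ (Nat.sub_le_sub_right hab.le kp)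
  have hFb : F b = (rP + rS) + F a := by
    simp only [hFdef]
    omega
  have hFlt : F a < F b := by
    rcases le_or_gt b kp with hb1 | hb1
    · have h1 : (csP.take (min a kp)).sum < (csP.take (min b kp)).sum := by
        rw [Nat.min_eq_left (hab.le.trans hb1), Nat.min_eq_left hb1]
        exact sum_take_strict csP hcsPpos hab (by omega)
      have h2 : a - kp = 0 := by omega
      have h3 : b - kp = 0 := by omega
      simp only [hFdef, h2, h3]
      omega
    · rcases Nat.lt_or_ge a kp with ha1 | ha1
      · have h1 : (csP.take (min a kp)).sum < (csP.take (min b kp)).sum := by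
          rw [Nat.min_eq_left ha1.le, Nat.min_eq_right hb1.le]
          exact sum_take_strict csP hcsPpos ha1 (by omega)
        have h2 : (csS.take (a - kp)).sum ≤ (csS.take (b - kp)).sum :=
          sum_take_mono csS (Nat.sub_le_sub_right hab.le kp)
        simp only [hFdef]
        omega
      · have h1 : min a kp = kp := Nat.min_eq_right ha1
        have h2 : min b kp = kp := Nat.min_eq_right hb1.le
        have h3 : (csS.take (a - kp)).sum < (csS.take (b - kp)).sum :=
          sum_take_strict csS hcsSpos (by omega) (by omega)
        simp only [hFdef, h1, h2]
        omega
  -- assemble the reduced walk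
  obtain ⟨VS', rfl⟩ : ∃ t, VS = g :: t := by
    have hh : VS.head? = some g := by rw [hremS.head?_eq]; rfl
    cases VS with
    | nil => simp at hh
    | cons u t =>
      simp only [List.head?_cons, Option.some.injEq] at hh
      subst hh
      exact ⟨t, rfl⟩
  have hVlen : (VP ++ g :: VS').length = VP.length + (VS'.length + 1) := by
    rw [List.length_append, List.length_cons]
  refine ⟨VP ++ g :: VS', ?_, ⟨g, hgC, by simp⟩, ?_, ?_⟩
  · exact (hremP.append_right (g :: S)).trans (hremS.append_left VP)
  · have hrem1 : 1 ≤ rP + rS := by omega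
    simp only [List.length_cons] at hlenS
    rw [helen]
    simp only [elen, hVlen]
    omega
  · have hmod : (rP + rS) % γ = 0 := by
      have h0 : F a + 0 ≡ F a + (rP + rS) [MOD γ] := by
        have hm : F a ≡ F b [MOD γ] := hFeq
        rw [hFb] at hm
        simpa [Nat.add_comm] using hm
      have := Nat.ModEq.add_left_cancel (Nat.ModEq.refl (F a)) h0
      simpa [Nat.ModEq] using this.symm
    simp only [List.length_cons] at hlenS
    have helenV : elen (VP ++ g :: VS') + (rP + rS) = P.length + S.length := by
      simp only [elen, hVlen]
      omega
    rw [helen]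
    have hstep : elen (VP ++ g :: VS') + 0 ≡ elen (VP ++ g :: VS') + (rP + rS) [MOD γ] :=
      Nat.ModEq.add_left _ (by simpa [Nat.ModEq] using hmod.symm)
    simpa [helenV] using hstep

/-- Bounded-fuel version of the reduction. -/
lemma remove_to_short (G C : SubD n) (γ : ℕ) (hγ : 1 ≤ γ) :
    ∀ (L : ℕ) (W : List (Fin n)), elen W ≤ L → IsWalkIn G W → (∃ v ∈ C.verts, v ∈ W) →
    ∃ V, RemOnly W V ∧ IsWalkIn G V ∧ (∃ v ∈ C.verts, v ∈ V) ∧ V.head? = W.head? ∧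
      V.getLast? = W.getLast? ∧ elen V ≡ elen W [MOD γ] ∧
      elen V ≤ γ * n + n - C.verts.ncard - 1 := by
  intro L
  induction L with
  | zero =>
    intro W h0 hW hvis
    exact ⟨W, Relation.ReflTransGen.refl, hW, hvis, rfl, rfl, Nat.ModEq.refl _, by omega⟩
  | succ L IH =>
    intro W hWL hW hvis
    by_cases hshort : elen W ≤ γ * n + n - C.verts.ncard - 1
    · exact ⟨W, Relation.ReflTransGen.refl, hW, hvis, rfl, rfl, Nat.ModEq.refl _, hshort⟩
    · obtain ⟨v, hvC, hvW⟩ := hvis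
      have hn : 0 < n := v.pos
      have hn₁ : C.verts.ncard ≤ n := by
        have h := Set.ncard_le_ncard (Set.subset_univ C.verts) (Set.toFinite _)
        rwa [Set.ncard_univ, Nat.card_eq_fintype_card, Fintype.card_fin] at h
      have hlong : γ * n + (n - C.verts.ncard) ≤ elen W := by
        have hge : n ≤ γ * n := Nat.le_mul_of_pos_left n hγ
        push_neg at hshort
        omega
      obtain ⟨V₁, hrem₁, hvis₁, hlt₁, hmod₁⟩ :=
        reduce_once G C γ hγ W ⟨v, hvC, hvW⟩ hlong
      have hW₁ : IsWalkIn G V₁ := hrem₁.walkIn hW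
      obtain ⟨V, hrem, hWV, hvisV, hh, hl, hm, hle⟩ := IH V₁ (by omega) hW₁ hvis₁
      exact ⟨V, hrem₁.trans hrem, hWV, hvisV, hh.trans hrem₁.head?_eq,
        hl.trans hrem₁.getLast?_eq, hm.trans hmod₁, hle⟩

end MaxPlus


namespace MaxPlus

/-- For a subgraph `C` of `G` on `n₁` nodes and any `γ ≥ 1`,
`T_cr^γ(C) ≤ γ·n + n − n₁ − 1`; concretely, every walk through `C` can be
reduced, by removing cycles only, to a walk through `C` with the same endpoints
and the same length mod `γ`, of length at most `γ·n + n − n₁ − 1`. -/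
theorem cycle_removal_arithmetic {n : ℕ} (G : SubD n) (C : SubD n) (hC : SubLE C G)
    (γ : ℕ) (hγ : 1 ≤ γ) :
    TcrProp G C γ (γ * n + n - C.verts.ncard - 1)
    ∧ ∀ W, IsWalkIn G W → (∃ v ∈ C.verts, v ∈ W) →
        ∃ V, RemOnly W V ∧ IsWalkIn G V ∧ (∃ v ∈ C.verts, v ∈ V) ∧
          V.head? = W.head? ∧ V.getLast? = W.getLast? ∧
          elen V ≡ elen W [MOD γ] ∧ elen V ≤ γ * n + n - C.verts.ncard - 1 := by
  have main := remove_to_short G C γ hγ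
  constructor
  · intro W hW hvis _hT
    obtain ⟨V, h1, h2, h3, h4, h5, h6, h7⟩ := main (elen W) W le_rfl hW hvis
    exact ⟨V, Relation.ReflTransGen.mono (fun _ _ h => Or.inl h) _ _ h1, h2, h3, h4, h5, h6, h7⟩
  · intro W hW hvis
    exact main (elen W) W le_rfl hW hvis

end MaxPlus
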